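/- If A is an n×n complex matrix with numerical range contained in the sector S_α for α ∈ [0, π/2), then |det A| ≤ secⁿ(α) · det(Re A). -/

import Mathlib

open Matrix
open scoped ComplexOrder InnerProductSpace
set_option maxHeartbeats 1000000

noncomputable section
namespace Paper

variable {n : ℕ}

/-- Real part `(A + Aᴴ)/2`. -/
def re (A : Matrix (Fin n) (Fin n) ℂ) : Matrix (Fin n) (Fin n) ℂ := (2⁻¹ : ℂ) • (A + Aᴴ)

/-- Imaginary part `(A - Aᴴ)/(2i)`. -/
def im (A : Matrix (Fin n) (Fin n) ℂ) : Matrix (Fin n) (Fin n) ℂ :=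
  (2 * Complex.I)⁻¹ • (A - Aᴴ)

/-- The sector `S_α`. -/
def sector (α : ℝ) : Set ℂ := {z | 0 < z.re ∧ |z.im| ≤ z.re * Real.tan α}

/-- Numerical range of a matrix. -/
def numericalRange (A : Matrix (Fin n) (Fin n) ℂ) : Set ℂ :=
  {z | ∃ x : Fin n → ℂ, star x ⬝ᵥ x = 1 ∧ z = star x ⬝ᵥ (A *ᵥ x)}

/-- Loewner order: `X ≤ Y` iff `Y - X` is positive semidefinite. -/
def loewnerLE (X Y : Matrix (Fin n) (Fin n) ℂ) : Prop := (Y - X).PosSemidef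

lemma re_isHermitian (A : Matrix (Fin n) (Fin n) ℂ) : (re A).IsHermitian := by
  show ((2⁻¹ : ℂ) • (A + Aᴴ))ᴴ = (2⁻¹ : ℂ) • (A + Aᴴ)
  rw [Matrix.conjTranspose_smul, Matrix.conjTranspose_add,
    Matrix.conjTranspose_conjTranspose, add_comm Aᴴ A]
  simp

/-- The `j`-th largest element of `v` (descending sort). -/
def nthLargest (v : Fin n → ℝ) (j : Fin n) : ℝ :=
  ((List.ofFn v).mergeSort (fun a b => decide (b ≤ a))).get
    (Fin.cast (by simp) j)

/-- `j`-th largest eigenvalue of a Hermitian matrix. -/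
def eigDesc {A : Matrix (Fin n) (Fin n) ℂ} (hA : A.IsHermitian) (j : Fin n) : ℝ :=
  nthLargest hA.eigenvalues j

/-- `j`-th largest singular value. -/
def singular (A : Matrix (Fin n) (Fin n) ℂ) (j : Fin n) : ℝ :=
  nthLargest (fun i => Real.sqrt ((Matrix.isHermitian_conjTranspose_mul_self A).eigenvalues i)) j

/-- Square root of a positive semidefinite matrix (the removed `Matrix.PosSemidef.sqrt`,
spelled out with its old definition). -/
def posSemidefSqrt {A : Matrix (Fin n) (Fin n) ℂ} (hA : A.PosSemidef) : Matrix (Fin n) (Fin n) ℂ :=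
  (hA.1.eigenvectorUnitary : Matrix (Fin n) (Fin n) ℂ) *
    diagonal ((RCLike.ofReal : ℝ → ℂ) ∘ Real.sqrt ∘ hA.1.eigenvalues) *
    (star hA.1.eigenvectorUnitary : Matrix (Fin n) (Fin n) ℂ)

/-- Weighted geometric mean of positive definite matrices. -/
def sharp (v : ℝ) {A B : Matrix (Fin n) (Fin n) ℂ} (hA : A.PosDef) (hB : B.PosDef) :
    Matrix (Fin n) (Fin n) ℂ :=
  posSemidefSqrt hA.posSemidef *
    (Matrix.isHermitian_mul_mul_conjTranspose (posSemidefSqrt hA.posSemidef)⁻¹ hB.1).cfc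
      (fun x => Real.rpow x v) * posSemidefSqrt hA.posSemidef

/-- Weighted arithmetic mean. -/
def arith (v : ℝ) (A B : Matrix (Fin n) (Fin n) ℂ) : Matrix (Fin n) (Fin n) ℂ :=
  (1 - v) • A + v • B

/-- Weighted harmonic mean. -/
def harm (v : ℝ) (A B : Matrix (Fin n) (Fin n) ℂ) : Matrix (Fin n) (Fin n) ℂ :=
  ((1 - v) • A⁻¹ + v • B⁻¹)⁻¹

/-- Kantorovich constant. -/
def K (h : ℝ) : ℝ := (h + 1) ^ 2 / (4 * h)


lemma conj_quad (A : Matrix (Fin n) (Fin n) ℂ) (x : Fin n → ℂ) :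
    star x ⬝ᵥ (Aᴴ *ᵥ x) = star (star x ⬝ᵥ (A *ᵥ x)) := by
  rw [star_dotProduct]
  congr 1
  rw [star_mulVec, dotProduct_mulVec, conjTranspose_conjTranspose]

lemma quad_re (A : Matrix (Fin n) (Fin n) ℂ) (x : Fin n → ℂ) :
    star x ⬝ᵥ (re A *ᵥ x) = (((star x ⬝ᵥ (A *ᵥ x)).re : ℝ) : ℂ) := by
  set z := star x ⬝ᵥ (A *ᵥ x) with hz
  rw [re, smul_mulVec, dotProduct_smul, add_mulVec, dotProduct_add, conj_quad, ← hz]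
  rw [show star z = (starRingEnd ℂ) z from rfl, Complex.add_conj]
  rw [smul_eq_mul]; push_cast; ring

lemma quad_im (A : Matrix (Fin n) (Fin n) ℂ) (x : Fin n → ℂ) :
    star x ⬝ᵥ (im A *ᵥ x) = (((star x ⬝ᵥ (A *ᵥ x)).im : ℝ) : ℂ) := by
  set z := star x ⬝ᵥ (A *ᵥ x) with hz
  rw [im, smul_mulVec, dotProduct_smul, sub_mulVec, dotProduct_sub, conj_quad, ← hz]
  rw [show star z = (starRingEnd ℂ) z from rfl, Complex.sub_conj]
  have : (2 * Complex.I)⁻¹ * (2 * z.im * Complex.I) = z.im := by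
    field_simp [Complex.I_ne_zero]
  simpa [smul_eq_mul] using this

lemma sector_quad {α : ℝ} {A : Matrix (Fin n) (Fin n) ℂ} (hA : numericalRange A ⊆ sector α)
    {x : Fin n → ℂ} (hx : x ≠ 0) :
    0 < (star x ⬝ᵥ (A *ᵥ x)).re ∧
      |(star x ⬝ᵥ (A *ᵥ x)).im| ≤ (star x ⬝ᵥ (A *ᵥ x)).re * Real.tan α := by
  set z := star x ⬝ᵥ (A *ᵥ x) with hz
  set c := star x ⬝ᵥ x with hc
  have hc0 : 0 ≤ c := dotProduct_star_self_nonneg x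
  have hcne : c ≠ 0 := fun h => hx (dotProduct_star_self_eq_zero.mp h)
  have hcre : 0 < c.re := by
    rcases Complex.nonneg_iff.mp hc0 with ⟨h1, h2⟩
    rcases lt_or_eq_of_le h1 with h | h
    · exact h
    · exact absurd (Complex.ext h.symm h2.symm) hcne
  have hceq : c = (c.re : ℂ) := Complex.ext rfl (Complex.nonneg_iff.mp hc0).2.symm
  set r : ℝ := Real.sqrt c.re with hr
  have hrpos : 0 < r := Real.sqrt_pos.mpr hcre
  have hr2 : r * r = c.re := Real.mul_self_sqrt hcre.le
  set y : Fin n → ℂ := ((r⁻¹ : ℝ) : ℂ) • x with hy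
  have hsy : star y = ((r⁻¹ : ℝ) : ℂ) • star x := by
    rw [hy, star_smul]; congr 1; simp
  have hyy : star y ⬝ᵥ y = 1 := by
    rw [hy, hsy, smul_dotProduct, dotProduct_smul, ← hc, hceq]
    rw [smul_eq_mul, smul_eq_mul]
    push_cast
    field_simp
    rw [← hr2]; push_cast; ring
  have hyA : star y ⬝ᵥ (A *ᵥ y) = (((r⁻¹ * r⁻¹ : ℝ)) : ℂ) * z := by
    rw [hy, hsy, mulVec_smul, smul_dotProduct, dotProduct_smul, ← hz]
    rw [smul_eq_mul, smul_eq_mul]; push_cast; ring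
  have hmem : star y ⬝ᵥ (A *ᵥ y) ∈ sector α := hA ⟨y, hyy, rfl⟩
  rw [hyA] at hmem
  obtain ⟨h1, h2⟩ := hmem
  have hre : ((((r⁻¹ * r⁻¹ : ℝ)) : ℂ) * z).re = (r⁻¹ * r⁻¹) * z.re := by
    simp [Complex.ofReal_mul, Complex.mul_re]
  have him : ((((r⁻¹ * r⁻¹ : ℝ)) : ℂ) * z).im = (r⁻¹ * r⁻¹) * z.im := by
    simp [Complex.ofReal_mul, Complex.mul_im]
  rw [hre] at h1 h2
  rw [him] at h2
  have hrr : 0 < r⁻¹ * r⁻¹ := by positivity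
  constructor
  · by_contra hcon
    push_neg at hcon
    nlinarith
  · rw [abs_mul, abs_of_pos hrr] at h2
    calc |z.im| = (r⁻¹ * r⁻¹)⁻¹ * ((r⁻¹ * r⁻¹) * |z.im|) := by field_simp
    _ ≤ (r⁻¹ * r⁻¹)⁻¹ * ((r⁻¹ * r⁻¹) * z.re * Real.tan α) := by
        apply mul_le_mul_of_nonneg_left _ (inv_nonneg.mpr hrr.le)
        linarith [h2]
    _ = z.re * Real.tan α := by field_simp

lemma im_isHermitian (A : Matrix (Fin n) (Fin n) ℂ) : (im A).IsHermitian := by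
  show ((2 * Complex.I)⁻¹ • (A - Aᴴ))ᴴ = (2 * Complex.I)⁻¹ • (A - Aᴴ)
  rw [Matrix.conjTranspose_smul, Matrix.conjTranspose_sub, Matrix.conjTranspose_conjTranspose]
  have : star (2 * Complex.I)⁻¹ = -(2 * Complex.I)⁻¹ := by
    simp [Complex.star_def, ← Complex.conj_inv]
  rw [this]
  rw [neg_smul, ← smul_neg, neg_sub]

lemma re_posDef {α : ℝ} {A : Matrix (Fin n) (Fin n) ℂ} (hA : numericalRange A ⊆ sector α) :
    (re A).PosDef := by
  refine PosDef.of_dotProduct_mulVec_pos (re_isHermitian A) (fun x hx => ?_)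
  rw [quad_re]
  exact_mod_cast Complex.zero_lt_real.mpr (sector_quad hA hx).1

lemma herm_smul_real (r : ℝ) {H : Matrix (Fin n) (Fin n) ℂ} (hH : H.IsHermitian) :
    ((r : ℂ) • H).IsHermitian := by
  show ((r : ℂ) • H)ᴴ = (r : ℂ) • H
  rw [Matrix.conjTranspose_smul, hH.eq]
  congr 1
  simp [Complex.star_def]

lemma loewner_pm {α : ℝ} {A : Matrix (Fin n) (Fin n) ℂ} (hA : numericalRange A ⊆ sector α)
    (ε : ℝ) (hε : ε = 1 ∨ ε = -1) :
    (((Real.tan α : ℂ)) • re A - (ε : ℂ) • im A).PosSemidef := by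
  refine PosSemidef.of_dotProduct_mulVec_nonneg
    ((herm_smul_real _ (re_isHermitian A)).sub (herm_smul_real _ (im_isHermitian A))) ?_
  intro x
  rw [sub_mulVec, dotProduct_sub, smul_mulVec, smul_mulVec, dotProduct_smul,
    dotProduct_smul, quad_re, quad_im, smul_eq_mul, smul_eq_mul]
  by_cases hx : x = 0
  · simp [hx]
  · obtain ⟨h1, h2⟩ := sector_quad hA hx
    set z := star x ⬝ᵥ (A *ᵥ x)
    have : (Real.tan α : ℂ) * (z.re : ℂ) - (ε : ℂ) * (z.im : ℂ)
        = ((z.re * Real.tan α - ε * z.im : ℝ) : ℂ) := by push_cast; ring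
    rw [this]
    rw [Complex.zero_le_real]
    have : ε * z.im ≤ |z.im| := by
      rcases hε with h | h <;> simp [h] <;> [exact le_abs_self z.im; exact neg_le_abs z.im]
    linarith


/-- `|det A| ≤ secⁿ α · det (Re A)` for a sector matrix. -/
theorem abs_det_le_sec_pow_det_re (α : ℝ) (hα : α ∈ Set.Ico 0 (Real.pi / 2))
    (A : Matrix (Fin n) (Fin n) ℂ) (hA : numericalRange A ⊆ sector α) :
    ‖A.det‖ ≤ (Real.cos α)⁻¹ ^ n * ((re A).det).re := by
  obtain ⟨hα0, hα2⟩ := hα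
  have hcos : 0 < Real.cos α := Real.cos_pos_of_mem_Ioo ⟨by linarith [Real.pi_pos], hα2⟩
  set t : ℝ := Real.tan α with ht
  have hR : (re A).PosDef := re_posDef hA
  set R : Matrix (Fin n) (Fin n) ℂ := re A with hRdef
  set M : Matrix (Fin n) (Fin n) ℂ := im A with hMdef
  set Q : Matrix (Fin n) (Fin n) ℂ := posSemidefSqrt hR.posSemidef with hQdef
  have hQH : Q.IsHermitian := by
    have hD : (diagonal ((RCLike.ofReal : ℝ → ℂ) ∘ Real.sqrt ∘
        hR.posSemidef.1.eigenvalues)).IsHermitian := by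
      rw [Matrix.IsHermitian, diagonal_conjTranspose]; congr 1; ext i; simp
    exact isHermitian_mul_mul_conjTranspose _ hD
  have hQQ : Q * Q = R := by
    have hsU := Unitary.star_mul_self_of_mem (hR.posSemidef.1.eigenvectorUnitary).2
    have hsp := hR.posSemidef.1.spectral_theorem
    rw [Unitary.conjStarAlgAut_apply] at hsp
    rw [hQdef, posSemidefSqrt]
    conv_rhs => rw [hsp]
    rw [show ∀ a b c d e f : Matrix (Fin n) (Fin n) ℂ, a * b * c * (d * e * f)
        = a * b * (c * d) * e * f from fun a b c d e f => by simp only [mul_assoc]]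
    rw [hsU, mul_one, mul_assoc _ (diagonal _) (diagonal _), diagonal_mul_diagonal]
    congr 3
    ext i
    simp only [Function.comp_apply]
    rw [← RCLike.ofReal_mul, Real.mul_self_sqrt (hR.posSemidef.eigenvalues_nonneg i)]
  have hdetR : 0 < R.det := hR.det_pos
  have hdetRne : R.det ≠ 0 := ne_of_gt hdetR
  have hdetQ : Q.det ≠ 0 := by
    intro h
    apply hdetRne
    rw [← hQQ, det_mul, h, mul_zero]
  have hQu : IsUnit Q.det := isUnit_iff_ne_zero.mpr hdetQ
  have hQl : Q⁻¹ * Q = 1 := nonsing_inv_mul Q hQu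
  have hQr : Q * Q⁻¹ = 1 := mul_nonsing_inv Q hQu
  have hQiH : Q⁻¹.IsHermitian := hQH.inv
  set S : Matrix (Fin n) (Fin n) ℂ := Q⁻¹ * M * Q⁻¹ with hSdef
  have hSH : S.IsHermitian := by
    show Sᴴ = S
    rw [hSdef, conjTranspose_mul, conjTranspose_mul, hQiH.eq, (im_isHermitian A).eq]
    rw [mul_assoc]
  -- conjugated Loewner inequalities
  have hconj : ∀ ε : ℝ, ε = 1 ∨ ε = -1 → ((t : ℂ) • 1 - (ε : ℂ) • S).PosSemidef := by
    intro ε hε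
    have h1 := (loewner_pm hA ε hε).mul_mul_conjTranspose_same Q⁻¹
    have heq : Q⁻¹ * ((t : ℂ) • R - (ε : ℂ) • M) * (Q⁻¹)ᴴ = (t : ℂ) • 1 - (ε : ℂ) • S := by
      rw [hQiH.eq, mul_sub, sub_mul, mul_smul_comm, mul_smul_comm, smul_mul_assoc,
        smul_mul_assoc, hSdef]
      congr 2
      rw [← hQQ, ← mul_assoc, mul_assoc (Q⁻¹ * Q), hQl, one_mul, hQr]
    rwa [heq] at h1
  -- eigenvalue bounds
  have heig : ∀ j : Fin n, |hSH.eigenvalues j| ≤ t := by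
    intro j
    set v : Fin n → ℂ := ⇑(hSH.eigenvectorBasis j) with hv
    have hvv : star v ⬝ᵥ v = 1 := by
      have h1 : (⟪hSH.eigenvectorBasis j, hSH.eigenvectorBasis j⟫_ℂ) = 1 := by
        rw [inner_self_eq_norm_sq_to_K, hSH.eigenvectorBasis.orthonormal.1 j]
        norm_num
      rwa [EuclideanSpace.inner_eq_star_dotProduct, dotProduct_comm] at h1
    have hSv : S *ᵥ v = (hSH.eigenvalues j : ℂ) • v := by
      have := hSH.mulVec_eigenvectorBasis j
      rw [← hv] at this
      rw [this]
      ext i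
      simp [Complex.real_smul]
    have key : ∀ ε : ℝ, ε = 1 ∨ ε = -1 → ε * hSH.eigenvalues j ≤ t := by
      intro ε hε
      have h2 := (hconj ε hε).dotProduct_mulVec_nonneg v
      rw [sub_mulVec, dotProduct_sub, smul_mulVec, smul_mulVec, one_mulVec,
        dotProduct_smul, dotProduct_smul, hvv, hSv, dotProduct_smul, hvv] at h2
      simp only [smul_eq_mul, mul_one] at h2
      have h3 : ((t - ε * hSH.eigenvalues j : ℝ) : ℂ) = (t:ℂ) - (ε:ℂ) * ((hSH.eigenvalues j : ℝ) : ℂ) := by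
        push_cast; ring
      rw [← h3, Complex.zero_le_real] at h2
      linarith
    rcases abs_cases (hSH.eigenvalues j) with ⟨h, _⟩ | ⟨h, _⟩
    · rw [h]; simpa using key 1 (Or.inl rfl)
    · rw [h]; have := key (-1) (Or.inr rfl); push_cast at this; linarith
  -- decomposition A = Q (1 + iS) Q
  have hRM : R + Complex.I • M = A := by
    rw [hRdef, hMdef, re, im]
    ext i j
    simp only [Matrix.add_apply, Matrix.smul_apply, smul_eq_mul, Matrix.sub_apply]
    field_simp
    ring
  have hdecomp : A = Q * (1 + Complex.I • S) * Q := by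
    rw [mul_add, mul_one, add_mul, mul_smul_comm, smul_mul_assoc, hQQ, hSdef]
    have hassoc : Q * (Q⁻¹ * M * Q⁻¹) * Q = (Q * Q⁻¹) * M * (Q⁻¹ * Q) := by
      simp only [mul_assoc]
    rw [hassoc, hQr, hQl, one_mul, mul_one, hRM]
  -- determinant computation
  set U : Matrix (Fin n) (Fin n) ℂ := (hSH.eigenvectorUnitary : Matrix (Fin n) (Fin n) ℂ) with hU
  have hUU : U * star U = 1 := (Matrix.mem_unitaryGroup_iff).mp hSH.eigenvectorUnitary.2
  have hspec : 1 + Complex.I • S =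
      U * diagonal (fun j => 1 + Complex.I * (hSH.eigenvalues j : ℂ)) * star U := by
    have h1 : diagonal (fun j => 1 + Complex.I * (hSH.eigenvalues j : ℂ))
        = 1 + Complex.I • diagonal (RCLike.ofReal ∘ hSH.eigenvalues) := by
      rw [← diagonal_one, ← diagonal_smul, diagonal_add]
      rfl
    rw [h1, mul_add, add_mul, mul_one, hUU, mul_smul_comm, smul_mul_assoc]
    congr 1
    have h := hSH.spectral_theorem; rw [Unitary.conjStarAlgAut_apply] at h; exact congrArg _ h
  have hdet1 : (1 + Complex.I • S).det = ∏ j, (1 + Complex.I * (hSH.eigenvalues j : ℂ)) := by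
    have hUU' : star U * U = 1 := mul_eq_one_comm.mp hUU
    rw [hspec, det_mul, det_mul, mul_comm, ← mul_assoc, ← det_mul, hUU', det_one, one_mul,
      det_diagonal]
  have hdetA : A.det = R.det * ∏ j, (1 + Complex.I * (hSH.eigenvalues j : ℂ)) := by
    rw [hdecomp, det_mul, det_mul, hdet1, ← hQQ, det_mul]
    ring
  -- abs estimates
  have hdetRre : R.det = ((R.det.re : ℝ) : ℂ) ∧ 0 < R.det.re := by
    have := hdetR
    rw [Complex.lt_def] at this
    obtain ⟨h1, h2⟩ := this
    simp only [Complex.zero_re, Complex.zero_im] at h1 h2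
    exact ⟨(Complex.ext rfl h2.symm), h1⟩
  have habsR : ‖R.det‖ = R.det.re := by
    rw [hdetRre.1]
    simp [abs_of_pos hdetRre.2]
  have hfac : ∀ j : Fin n, ‖1 + Complex.I * (hSH.eigenvalues j : ℂ)‖ ≤ (Real.cos α)⁻¹ := by
    intro j
    have h1 : ‖1 + Complex.I * (hSH.eigenvalues j : ℂ)‖
        = Real.sqrt (1 + hSH.eigenvalues j ^ 2) := by
      rw [Complex.norm_def]
      congr 1
      simp [Complex.normSq_apply]
      ring
    rw [h1]
    have h2 : 1 + hSH.eigenvalues j ^ 2 ≤ 1 + t ^ 2 := by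
      have := heig j
      nlinarith [abs_nonneg (hSH.eigenvalues j), sq_abs (hSH.eigenvalues j)]
    calc Real.sqrt (1 + hSH.eigenvalues j ^ 2) ≤ Real.sqrt (1 + t ^ 2) := Real.sqrt_le_sqrt h2
    _ = (Real.cos α)⁻¹ := by
        rw [← Real.inv_sqrt_one_add_tan_sq hcos, inv_inv]
  calc ‖A.det‖ = R.det.re * ∏ j, ‖1 + Complex.I * (hSH.eigenvalues j : ℂ)‖ := by
        rw [hdetA, norm_mul, habsR, norm_prod]
  _ ≤ R.det.re * ∏ _j : Fin n, (Real.cos α)⁻¹ := by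
        apply mul_le_mul_of_nonneg_left _ hdetRre.2.le
        exact Finset.prod_le_prod (fun j _ => norm_nonneg _) (fun j _ => hfac j)
  _ = (Real.cos α)⁻¹ ^ n * R.det.re := by
        rw [Finset.prod_const, Finset.card_univ, Fintype.card_fin, mul_comm]


end Paper
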